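/- For every natural number n ≥ 0, the alternating sum ∑_{k=0}^{⌊n/2⌋} (-1)^k · C(n-k, k) · q^k · (1+q)^{n-2k} equals ∑_{i=0}^{n} q^i, as an identity of polynomials in the variable q over the integers. -/

import Mathlib

open Polynomial Finset

/-- The general term of the alternating sum. -/
noncomputable def cterm (n k : ℕ) : Polynomial ℤ :=
  (-1 : Polynomial ℤ) ^ k * (Nat.choose (n - k) k : Polynomial ℤ) *
    X ^ k * (1 + X) ^ (n - 2 * k)

lemma cterm_eq_zero {n k : ℕ} (h : n < 2 * k) : cterm n k = 0 := by
  have : n - k < k := by omega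
  simp [cterm, Nat.choose_eq_zero_of_lt this]

lemma sum_pad (n m : ℕ) (h : n / 2 + 1 ≤ m) :
    ∑ k ∈ Finset.range (n / 2 + 1), cterm n k = ∑ k ∈ Finset.range m, cterm n k := by
  refine Finset.sum_subset (Finset.range_subset_range.2 h) ?_
  intro k hk hk'
  simp only [Finset.mem_range] at hk hk'
  exact cterm_eq_zero (by omega)

lemma cterm_step (n k : ℕ) (hk : k ≤ n) :
    cterm (n + 2) (k + 1) + X * cterm n k = (1 + X) * cterm (n + 1) (k + 1) := by
  have h1 : n + 2 - (k + 1) = (n - k) + 1 := by omega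
  have h2 : n + 2 - 2 * (k + 1) = n - 2 * k := by omega
  have h3 : n + 1 - (k + 1) = n - k := by omega
  rw [cterm, cterm, cterm, h1, h2, h3, Nat.choose_succ_succ (n - k) k]
  by_cases hc : 2 * k + 1 ≤ n
  · have h4 : n - 2 * k = (n + 1 - 2 * (k + 1)) + 1 := by omega
    rw [h4, pow_succ]
    push_cast
    ring
  · have h5 : n - k < k + 1 := by omega
    rw [Nat.choose_eq_zero_of_lt h5]
    push_cast
    ring

lemma key (n : ℕ) :
    (∑ k ∈ Finset.range ((n + 2) / 2 + 1), cterm (n + 2) k)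
      + X * ∑ k ∈ Finset.range (n / 2 + 1), cterm n k
    = (1 + X) * ∑ k ∈ Finset.range ((n + 1) / 2 + 1), cterm (n + 1) k := by
  rw [sum_pad (n + 2) (n + 3) (by omega), sum_pad n (n + 3) (by omega),
    sum_pad (n + 1) (n + 3) (by omega)]
  have e1 : ∑ k ∈ Finset.range (n + 3), cterm (n + 2) k
      = (∑ k ∈ Finset.range (n + 1), cterm (n + 2) (k + 1)) + cterm (n + 2) 0 := by
    rw [Finset.sum_range_succ' (fun k => cterm (n + 2) k) (n + 2),
      Finset.sum_range_succ (fun k => cterm (n + 2) (k + 1)) (n + 1),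
      cterm_eq_zero (show n + 2 < 2 * (n + 2) by omega), add_zero]
  have e2 : ∑ k ∈ Finset.range (n + 3), cterm n k
      = ∑ k ∈ Finset.range (n + 1), cterm n k := by
    rw [Finset.sum_range_succ, Finset.sum_range_succ,
      cterm_eq_zero (show n < 2 * (n + 1) by omega),
      cterm_eq_zero (show n < 2 * (n + 2) by omega), add_zero, add_zero]
  have e3 : ∑ k ∈ Finset.range (n + 3), cterm (n + 1) k
      = (∑ k ∈ Finset.range (n + 1), cterm (n + 1) (k + 1)) + cterm (n + 1) 0 := by
    rw [Finset.sum_range_succ' (fun k => cterm (n + 1) k) (n + 2),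
      Finset.sum_range_succ (fun k => cterm (n + 1) (k + 1)) (n + 1),
      cterm_eq_zero (show n + 1 < 2 * (n + 2) by omega), add_zero]
  rw [e1, e2, e3]
  have c0 : cterm (n + 2) 0 = (1 + X) ^ (n + 2) := by simp [cterm]
  have c1 : cterm (n + 1) 0 = (1 + X) ^ (n + 1) := by simp [cterm]
  rw [c0, c1]
  have hsum : ∑ k ∈ Finset.range (n + 1), (cterm (n + 2) (k + 1) + X * cterm n k)
      = ∑ k ∈ Finset.range (n + 1), (1 + X) * cterm (n + 1) (k + 1) := by
    refine Finset.sum_congr rfl ?_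
    intro k hk
    exact cterm_step n k (by simpa using Nat.lt_succ_iff.mp (Finset.mem_range.mp hk))
  rw [Finset.sum_add_distrib] at hsum
  rw [← Finset.mul_sum] at hsum
  linear_combination hsum - Finset.mul_sum (Finset.range (n + 1)) (fun k => cterm (n + 1) (k + 1)) ((1 : Polynomial ℤ) + X)

lemma geom_key (n : ℕ) :
    (∑ i ∈ Finset.range (n + 3), (X : Polynomial ℤ) ^ i)
      + X * ∑ i ∈ Finset.range (n + 1), (X : Polynomial ℤ) ^ i
    = (1 + X) * ∑ i ∈ Finset.range (n + 2), (X : Polynomial ℤ) ^ i := by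
  have h1 : X * ∑ i ∈ Finset.range (n + 1), (X : Polynomial ℤ) ^ i
      = ∑ i ∈ Finset.range (n + 1), (X : Polynomial ℤ) ^ (i + 1) := by
    rw [Finset.mul_sum]; exact Finset.sum_congr rfl fun i _ => (pow_succ' X i).symm
  have h2 : X * ∑ i ∈ Finset.range (n + 2), (X : Polynomial ℤ) ^ i
      = ∑ i ∈ Finset.range (n + 2), (X : Polynomial ℤ) ^ (i + 1) := by
    rw [Finset.mul_sum]; exact Finset.sum_congr rfl fun i _ => (pow_succ' X i).symm
  have h3 := Finset.sum_range_succ' (fun i => (X : Polynomial ℤ) ^ i) (n + 1)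
  have h4 := Finset.sum_range_succ' (fun i => (X : Polynomial ℤ) ^ i) (n + 2)
  simp only [pow_zero] at h3 h4
  rw [h1, h4]
  rw [one_add_mul (X : Polynomial ℤ), h2, h3]
  ring

theorem stmt_0 (n : ℕ) :
    ∑ k ∈ Finset.range (n / 2 + 1),
      ((-1 : Polynomial ℤ) ^ k * (Nat.choose (n - k) k : Polynomial ℤ) *
        X ^ k * (1 + X) ^ (n - 2 * k))
    = ∑ i ∈ Finset.range (n + 1), X ^ i := by
  induction n using Nat.twoStepInduction with
  | zero => simp [Finset.sum_range_succ]
  | one => simp [Finset.sum_range_succ]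
  | more n ih1 ih2 =>
    have hk := key n
    have hg := geom_key n
    simp only [show ∀ m k : ℕ, ((-1 : Polynomial ℤ) ^ k * (Nat.choose (m - k) k : Polynomial ℤ) *
        X ^ k * (1 + X) ^ (m - 2 * k)) = cterm m k from fun _ _ => rfl] at *
    linear_combination hk - hg + ((1 : Polynomial ℤ) + X) * ih2 - X * ih1
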